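/- For every n ≥ 1, every j with 1 ≤ j ≤ n, and every subset I ⊆ [n] with i = r_n(I), the cardinality |({1} ∪ [n−j+2, n]) \ I| is odd if and only if t_{⌊(i−1)/2^{n+1−j}⌋} ≡ i + j (mod 2), where (t_m)_{m≥0} is the Thue–Morse sequence. -/

import Mathlib

open Finset Polynomial
open scoped Classical

namespace AR

/-- `binVal I = r_n(I) - 1 = Σ_{i ∈ I} 2^(i-1)`. -/
def binVal (I : Finset ℕ) : ℕ := ∑ i ∈ I, 2 ^ (i - 1)

lemma binVal_Icc (m : ℕ) : binVal (Finset.Icc 1 m) = 2 ^ m - 1 := by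
  induction m with
  | zero => simp [binVal]
  | succ k ih =>
      rw [binVal, Finset.sum_Icc_succ_top (by omega)]
      rw [binVal] at ih
      rw [ih]
      have h1 : 1 ≤ 2 ^ k := Nat.one_le_two_pow
      simp only [Nat.add_sub_cancel, pow_succ]
      omega

lemma binVal_lt {n : ℕ} {I : Finset ℕ} (h : I ⊆ Finset.Icc 1 n) : binVal I < 2 ^ n := by
  have h1 : binVal I ≤ binVal (Finset.Icc 1 n) :=
    Finset.sum_le_sum_of_subset h
  have h2 := binVal_Icc n
  have h3 : 1 ≤ 2 ^ n := Nat.one_le_two_pow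
  omega

/-- The row/column index (zero-based, i.e. `r_n(I) - 1`) corresponding to a subset `I ⊆ [n]`. -/
def idx (n : ℕ) (I : Finset ℕ) (h : I ⊆ Finset.Icc 1 n) : Fin (2 ^ n) :=
  ⟨binVal I, binVal_lt h⟩

def blockEquiv (n : ℕ) : Fin (2 ^ n) ⊕ Fin (2 ^ n) ≃ Fin (2 ^ (n + 1)) :=
  finSumFinEquiv.trans (finCongr (by rw [pow_succ, mul_two]))

/-- The pair of Adin–Roichman matrices `(A_n, B_n)`, defined recursively. -/
def ABpair : (n : ℕ) → Matrix (Fin (2 ^ n)) (Fin (2 ^ n)) ℤ × Matrix (Fin (2 ^ n)) (Fin (2 ^ n)) ℤ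
  | 0 => (Matrix.of fun _ _ => 1, Matrix.of fun _ _ => 1)
  | n + 1 =>
      let p := ABpair n
      ((Matrix.reindex (blockEquiv n) (blockEquiv n)) (Matrix.fromBlocks p.1 p.1 p.1 (-p.2)),
       (Matrix.reindex (blockEquiv n) (blockEquiv n)) (Matrix.fromBlocks p.1 p.1 0 (-p.2)))

def A (n : ℕ) : Matrix (Fin (2 ^ n)) (Fin (2 ^ n)) ℤ := (ABpair n).1

def B (n : ℕ) : Matrix (Fin (2 ^ n)) (Fin (2 ^ n)) ℤ := (ABpair n).2

/-- `R` is a (nonempty) integer interval. -/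
def IsInterval (R : Finset ℕ) : Prop := ∃ a b : ℕ, R = Finset.Icc a b

/-- `R` is a run of `I`: a maximal nonempty interval contained in `I`. -/
def IsRun (I R : Finset ℕ) : Prop :=
  R.Nonempty ∧ IsInterval R ∧ R ⊆ I ∧
    ∀ S : Finset ℕ, IsInterval S → S ⊆ I → R ⊆ S → S = R

/-- `R` is a prefix of `S` : `min R = min S` and `R ⊆ S`. -/
def IsPrefixOf (R S : Finset ℕ) : Prop := R.min = S.min ∧ R ⊆ S

/-- `I ≫ J` : every run of `I ∩ J` is a prefix of a run of `I`. -/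
def Gg (I J : Finset ℕ) : Prop :=
  ∀ R : Finset ℕ, IsRun (I ∩ J) R → ∃ S : Finset ℕ, IsRun I S ∧ IsPrefixOf R S

/-- The set of runs of `I`. -/
noncomputable def runs (I : Finset ℕ) : Finset (Finset ℕ) :=
  I.powerset.filter (fun R => IsRun I R)

/-- `π(I)`: the product of (size + 1) over the runs of `I`. -/
noncomputable def piFun (I : Finset ℕ) : ℕ := ∏ R ∈ runs I, (R.card + 1)

/-- `π'_n(I)`: the product of (size + 1) over the runs of `I` not containing `n`. -/
noncomputable def piFun' (n : ℕ) (I : Finset ℕ) : ℕ :=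
  ∏ R ∈ (runs I).filter (fun R => n ∉ R), (R.card + 1)

/-- The subset of `[n]` encoded by a zero-based index `i : Fin (2^n)` (binary digits). -/
def decode (n : ℕ) (i : Fin (2 ^ n)) : Finset ℕ :=
  (Finset.Icc 1 n).filter (fun k => Nat.testBit i.val (k - 1))

/-- The matrix `U_n`, with `U_n(I,J) = 1` if `I ⊇ J` and `0` otherwise. -/
def U (n : ℕ) : Matrix (Fin (2 ^ n)) (Fin (2 ^ n)) ℤ :=
  Matrix.of fun i j => if decode n j ⊆ decode n i then 1 else 0

/-- The matrix `V_n = U_n⁻¹`, with `V_n(I,J) = (-1)^{|I \ J|}` if `I ⊇ J` and `0` otherwise. -/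
def V (n : ℕ) : Matrix (Fin (2 ^ n)) (Fin (2 ^ n)) ℤ :=
  Matrix.of fun i j =>
    if decode n j ⊆ decode n i then (-1) ^ ((decode n i) \ (decode n j)).card else 0

def A' (n : ℕ) : Matrix (Fin (2 ^ n)) (Fin (2 ^ n)) ℤ := U n * A n * V n

def B' (n : ℕ) : Matrix (Fin (2 ^ n)) (Fin (2 ^ n)) ℤ := U n * B n * V n

/-- `E ⪯ I` : `E ⊆ I`, `E` contains no minimal element of a run of `I`,
and `E` contains no two consecutive integers. -/
def SubPrec (E I : Finset ℕ) : Prop :=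
  E ⊆ I ∧ (∀ R : Finset ℕ, (h : IsRun I R) → R.min' h.1 ∉ E) ∧
    ∀ i : ℕ, ¬ (i ∈ E ∧ i + 1 ∈ E)

/-- `I ⇝ J` : `J = ([n] \ I) ∪ E` for some `E ⪯ I`. -/
def Step (n : ℕ) (I J : Finset ℕ) : Prop :=
  ∃ E : Finset ℕ, SubPrec E I ∧ J = (Finset.Icc 1 n \ I) ∪ E

/-- `π_μ` for a composition `μ` of `n`. -/
def piComp {n : ℕ} (μ : Composition n) : ℕ := (μ.blocks.map (· + 1)).prod

/-- `π'_μ` for a composition `μ` of `n`. -/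
def piComp' {n : ℕ} (μ : Composition n) : ℕ := (μ.blocks.dropLast.map (· + 1)).prod

/-- The Thue–Morse sequence: `thueMorse m = s₂(m) % 2`. -/
def thueMorse (m : ℕ) : ℕ := (Nat.digits 2 m).sum % 2

lemma digitsSum_eq (n : ℕ) : (Nat.digits 2 n).sum = n.bitIndices.length := by
  induction n using Nat.strong_induction_on with
  | _ n ih =>
    match n with
    | 0 => simp
    | Nat.succ n =>
      rw [Nat.digits_def' (by norm_num : 1 < 2) (Nat.succ_pos n), List.sum_cons,
        ih _ (Nat.div_lt_self (Nat.succ_pos n) one_lt_two)]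
      show (n + 1) % 2 + ((n + 1) / 2).bitIndices.length = (n + 1).bitIndices.length
      rcases Nat.even_or_odd (n + 1) with ⟨q, hq⟩ | ⟨q, hq⟩
      · have h1 : n + 1 = 2 * q := by omega
        rw [h1, Nat.mul_div_cancel_left _ two_pos, Nat.mul_mod_right,
          Nat.bitIndices_two_mul]
        simp
      · rw [hq, Nat.mul_add_div two_pos, Nat.mul_add_mod, Nat.bitIndices_two_mul_add_one]
        simp [Nat.add_comm]

lemma thueMorse_pow_sum (s : Finset ℕ) : thueMorse (∑ i ∈ s, 2 ^ i) = s.card % 2 := by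
  have hsum : ∑ i ∈ s, 2 ^ i = ((s.sort (· ≤ ·)).map (2 ^ ·)).sum := by
    rw [← Finset.sum_map_toList]
    exact (List.Perm.sum_eq ((s.sort_perm_toList (· ≤ ·)).map _)).symm
  rw [thueMorse, digitsSum_eq, hsum, Nat.bitIndices_twoPowsum (s.sortedLT_sort),
    Finset.length_sort]

theorem stmt18 (n j : ℕ) (hn : 1 ≤ n) (hj1 : 1 ≤ j) (hjn : j ≤ n)
    (I : Finset ℕ) (hI : I ⊆ Finset.Icc 1 n) :
    (Odd ((insert 1 (Finset.Icc (n - j + 2) n) \ I).card) ↔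
      thueMorse (((1 + binVal I) - 1) / 2 ^ (n + 1 - j)) ≡ (1 + binVal I) + j [MOD 2]) := by
  set m := n + 1 - j with hm
  set Ihigh := I.filter (fun k => m + 1 ≤ k) with hIhighdef
  -- the quotient
  have hlow : binVal (I.filter (fun k => ¬ m + 1 ≤ k)) < 2 ^ m := by
    refine binVal_lt (fun k hk => ?_)
    simp only [Finset.mem_filter] at hk
    have := hI hk.1
    rw [Finset.mem_Icc] at this ⊢
    omega
  have hsplit : binVal I = binVal (I.filter (fun k => ¬ m + 1 ≤ k)) + binVal Ihigh := by
    rw [binVal, binVal, binVal, add_comm,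
      Finset.sum_filter_add_sum_filter_not I (fun k => m + 1 ≤ k)]
  have hhigh : binVal Ihigh = 2 ^ m * ∑ k ∈ Ihigh, 2 ^ (k - 1 - m) := by
    rw [binVal, Finset.mul_sum]
    refine Finset.sum_congr rfl fun k hk => ?_
    have hk' : m + 1 ≤ k := (Finset.mem_filter.1 hk).2
    rw [← pow_add]
    congr 1
    omega
  have hdiv : binVal I / 2 ^ m = ∑ k ∈ Ihigh, 2 ^ (k - 1 - m) := by
    rw [hsplit, hhigh, Nat.add_mul_div_left _ _ (pow_pos two_pos m),
      Nat.div_eq_of_lt hlow, zero_add]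
  have hinjOn : ∀ a ∈ Ihigh, ∀ b ∈ Ihigh, a - (m + 1) = b - (m + 1) → a = b := by
    intro a ha b hb hab
    have ha' := (Finset.mem_filter.1 ha).2
    have hb' := (Finset.mem_filter.1 hb).2
    omega
  have himg : ∑ k ∈ Ihigh, 2 ^ (k - 1 - m) =
      ∑ i ∈ Ihigh.image (fun k => k - (m + 1)), 2 ^ i := by
    rw [Finset.sum_image hinjOn]
    exact Finset.sum_congr rfl fun k _ => by congr 1; omega
  have hTM : thueMorse (binVal I / 2 ^ m) = Ihigh.card % 2 := by
    rw [hdiv, himg, thueMorse_pow_sum, Finset.card_image_of_injOn hinjOn]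
  -- parity of binVal I
  have hpar : binVal I % 2 = (if 1 ∈ I then 1 else 0) := by
    have hsplit1 : binVal I = (∑ k ∈ I.filter (fun k => k = 1), 2 ^ (k - 1)) +
        ∑ k ∈ I.filter (fun k => ¬ k = 1), 2 ^ (k - 1) := by
      rw [binVal, Finset.sum_filter_add_sum_filter_not]
    have hfirst : (∑ k ∈ I.filter (fun k => k = 1), 2 ^ (k - 1)) =
        (if 1 ∈ I then 1 else 0) := by
      have heq : I.filter (fun k => k = 1) = if 1 ∈ I then {1} else ∅ :=
        Finset.filter_eq' I 1
      rw [heq]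
      split_ifs <;> simp
    have hsecond : 2 ∣ ∑ k ∈ I.filter (fun k => ¬ k = 1), 2 ^ (k - 1) := by
      refine Finset.dvd_sum fun k hk => ?_
      simp only [Finset.mem_filter] at hk
      have := hI hk.1
      rw [Finset.mem_Icc] at this
      exact dvd_pow_self 2 (by omega)
    obtain ⟨t, ht⟩ := hsecond
    rw [hsplit1, hfirst, ht]
    split_ifs <;> omega
  -- counting
  have h1T : (1 : ℕ) ∉ Finset.Icc (n - j + 2) n := by
    rw [Finset.mem_Icc]
    omega
  have hcardS : (insert 1 (Finset.Icc (n - j + 2) n)).card = j := by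
    rw [Finset.card_insert_of_notMem h1T, Nat.card_Icc]
    omega
  have hTI : Finset.Icc (n - j + 2) n ∩ I = Ihigh := by
    ext k
    simp only [Finset.mem_inter, Finset.mem_Icc, hIhighdef, Finset.mem_filter]
    constructor
    · rintro ⟨⟨h1, h2⟩, h3⟩
      exact ⟨h3, by omega⟩
    · rintro ⟨h1, h2⟩
      have := hI h1
      rw [Finset.mem_Icc] at this
      exact ⟨⟨by omega, this.2⟩, h1⟩
  have hinter : ((insert 1 (Finset.Icc (n - j + 2) n)) ∩ I).card =
      (if 1 ∈ I then 1 else 0) + Ihigh.card := by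
    by_cases h1 : 1 ∈ I
    · rw [Finset.insert_inter_of_mem h1,
        Finset.card_insert_of_notMem (fun h => h1T (Finset.mem_inter.1 h).1), hTI, if_pos h1]
      omega
    · rw [Finset.insert_inter_of_notMem h1, hTI, if_neg h1]
      omega
  have hsdiff : ((insert 1 (Finset.Icc (n - j + 2) n)) \ I).card +
      ((insert 1 (Finset.Icc (n - j + 2) n)) ∩ I).card = j := by
    rw [Finset.card_sdiff_add_card_inter, hcardS]
  rw [Nat.add_sub_cancel_left] at *
  rw [Nat.odd_iff]
  show _ ↔ thueMorse (binVal I / 2 ^ m) % 2 = (1 + binVal I + j) % 2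
  rw [hTM]
  by_cases h1 : 1 ∈ I <;> simp only [h1, if_true, if_false] at hpar hinter <;> omega


end AR
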